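/- Fix R > 0. Let ξ(t) = (3/2)^{1/3} t^{1/3}, u(x₁,x₂,t) = max(x₁², ξ(t)²) + max(x₂², ξ(t)²) − 2R², and σ(x,t) = (clamp(x₁/ξ(t)), clamp(x₂/ξ(t))) where clamp(s) = max(−1, min(1, s)). Then for every t > 0 and every x = (x₁,x₂) ∈ ℝ² with |x₁| ≠ ξ(t) and |x₂| ≠ ξ(t): the function s ↦ u(x,s) is differentiable at s = t, the partial derivatives ∂σ₁/∂x₁ and ∂σ₂/∂x₂ of σ(·,t) exist at x, and ∂u/∂t(x,t) = ∂σ₁/∂x₁(x,t) + ∂σ₂/∂x₂(x,t). Explicitly, both sides equal 2/ξ(t) when |x₁|,|x₂| < ξ(t), equal 1/ξ(t) when exactly one of |x₁|,|x₂| is < ξ(t), and equal 0 when |x₁|,|x₂| > ξ(t). Thus u solves the anisotropic total variation flow u_t = div σ pointwise on ℝ² × (0,∞) outside the one-dimensional exceptional set {|x₁| = ξ(t)} ∪ {|x₂| = ξ(t)}. -/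

import Mathlib

noncomputable def cc : ℝ := (3/2 : ℝ) ^ ((1:ℝ)/3)

lemma cc_pos : 0 < cc := Real.rpow_pos_of_pos (by norm_num) _

lemma xi_deriv (t : ℝ) (ht : 0 < t) :
    HasDerivAt (fun s : ℝ => cc * s ^ ((1:ℝ)/3))
      (cc * (((1:ℝ)/3) * t ^ ((1:ℝ)/3 - 1))) t :=
  (Real.hasDerivAt_rpow_const (Or.inl ht.ne')).const_mul cc

lemma xi_sq_deriv (t : ℝ) (ht : 0 < t) :
    HasDerivAt (fun s : ℝ => (cc * s ^ ((1:ℝ)/3))^2)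
      (1 / (cc * t ^ ((1:ℝ)/3))) t := by
  have h2 := (xi_deriv t ht).pow 2
  convert h2 using 1
  · rfl
  · rfl
  · rfl
  have hp : (0:ℝ) < t ^ ((1:ℝ)/3) := Real.rpow_pos_of_pos ht _
  have h1 : t ^ ((1:ℝ)/3) * (t ^ ((1:ℝ)/3) * t ^ ((1:ℝ)/3 - 1)) = 1 := by
    rw [← Real.rpow_add ht, ← Real.rpow_add ht]
    norm_num
  have hc3 : cc * (cc * cc) = 3/2 := by
    rw [cc, ← Real.rpow_add (by norm_num), ← Real.rpow_add (by norm_num)]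
    norm_num
  push_cast
  rw [div_eq_iff (mul_pos cc_pos hp).ne']
  nlinarith [cc_pos, hp, h1, hc3]

lemma aux_space (ξt a : ℝ) (hξt : 0 < ξt) (h : |a| ≠ ξt) :
    HasDerivAt (fun y : ℝ => max (-1) (min 1 (y / ξt)))
      (if |a| < ξt then 1/ξt else 0) a := by
  rcases h.lt_or_gt with hlt | hgt
  · rw [if_pos hlt]
    have h1 : ∀ᶠ y in nhds a, |y| < ξt :=
      (continuous_abs.continuousAt (x := a)).eventually_lt_const hlt
    refine HasDerivAt.congr_of_eventuallyEq ((hasDerivAt_id a).div_const ξt) ?_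
    filter_upwards [h1] with y hy
    obtain ⟨hy1, hy2⟩ := abs_lt.mp hy
    have hle : y / ξt ≤ 1 := (div_le_one hξt).2 hy2.le
    have hge : -1 ≤ y / ξt := by
      rw [neg_le, ← neg_div]
      exact (div_le_one hξt).2 (by linarith)
    rw [min_eq_right hle, max_eq_right hge]; rfl
  · rw [if_neg (not_lt.2 hgt.le)]
    rcases lt_or_ge a 0 with ha | ha
    · have haval : a < -ξt := by
        rw [abs_of_neg ha] at hgt; linarith
      have h1 : ∀ᶠ y in nhds a, y < -ξt :=
        (continuousAt_id (x := a)).eventually_lt_const haval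
      refine HasDerivAt.congr_of_eventuallyEq (hasDerivAt_const a (-1)) ?_
      filter_upwards [h1] with y hy
      have : y / ξt ≤ -1 := by
        rw [div_le_iff₀ hξt]; linarith
      rw [min_eq_right (by linarith), max_eq_left this]
    · have haval : ξt < a := by
        rw [abs_of_nonneg ha] at hgt; exact hgt
      have h1 : ∀ᶠ y in nhds a, ξt < y :=
        (continuousAt_id (x := a)).eventually_const_lt haval
      refine HasDerivAt.congr_of_eventuallyEq (hasDerivAt_const a 1) ?_
      filter_upwards [h1] with y hy
      have : (1:ℝ) ≤ y / ξt := (one_le_div hξt).2 hy.le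
      rw [min_eq_left this, max_eq_right (by norm_num)]

lemma aux_time (t a : ℝ) (ht : 0 < t) (h : |a| ≠ cc * t ^ ((1:ℝ)/3)) :
    HasDerivAt (fun s : ℝ => max (a^2) ((cc * s ^ ((1:ℝ)/3))^2))
      (if |a| < cc * t ^ ((1:ℝ)/3) then 1 / (cc * t ^ ((1:ℝ)/3)) else 0) t := by
  have hcont : ContinuousAt (fun s : ℝ => cc * s ^ ((1:ℝ)/3)) t :=
    (xi_deriv t ht).continuousAt
  rcases h.lt_or_gt with hlt | hgt
  · rw [if_pos hlt]
    have h1 : ∀ᶠ s in nhds t, |a| < cc * s ^ ((1:ℝ)/3) :=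
      hcont.eventually_const_lt hlt
    refine HasDerivAt.congr_of_eventuallyEq (xi_sq_deriv t ht) ?_
    filter_upwards [h1] with s hs
    obtain ⟨h1, h2⟩ := abs_lt.mp hs
    exact max_eq_right (sq_lt_sq' h1 h2).le
  · rw [if_neg (not_lt.2 hgt.le)]
    have h1 : ∀ᶠ s in nhds t, cc * s ^ ((1:ℝ)/3) < |a| :=
      hcont.eventually_lt_const hgt
    have h2 : ∀ᶠ s in nhds t, 0 < cc * s ^ ((1:ℝ)/3) :=
      hcont.eventually_const_lt (mul_pos cc_pos (Real.rpow_pos_of_pos ht _))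
    refine HasDerivAt.congr_of_eventuallyEq (hasDerivAt_const t (a^2)) ?_
    filter_upwards [h1, h2] with s hs hs0
    refine max_eq_left ?_
    calc (cc * s ^ ((1:ℝ)/3))^2 ≤ |a|^2 := by nlinarith
    _ = a^2 := sq_abs a

/-- u(x,t) = max(x₁², ξ(t)²) + max(x₂², ξ(t)²) − 2R² solves
u_t = ∂σ₁/∂x₁ + ∂σ₂/∂x₂ pointwise on ℝ² × (0,∞) outside the exceptional set
{|x₁| = ξ(t)} ∪ {|x₂| = ξ(t)}, where σ(x,t) = (clamp(x₁/ξ(t)), clamp(x₂/ξ(t))).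
Both sides equal 2/ξ(t), 1/ξ(t) or 0 according to how many of |x₁|, |x₂| are
below ξ(t). -/
theorem stmt6 (R : ℝ) (hR : 0 < R)
    (ξ : ℝ → ℝ)
    (hξ : ∀ s : ℝ, ξ s = (3/2 : ℝ) ^ ((1:ℝ)/3) * s ^ ((1:ℝ)/3))
    (clamp : ℝ → ℝ)
    (hclamp : ∀ s : ℝ, clamp s = max (-1) (min 1 s))
    (u : ℝ × ℝ → ℝ → ℝ)
    (hu : ∀ (x : ℝ × ℝ) (s : ℝ),
      u x s = max (x.1^2) ((ξ s)^2) + max (x.2^2) ((ξ s)^2) - 2 * R^2)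
    (σ : ℝ × ℝ → ℝ → ℝ × ℝ)
    (hσ : ∀ (x : ℝ × ℝ) (s : ℝ), σ x s = (clamp (x.1 / ξ s), clamp (x.2 / ξ s))) :
    ∀ t : ℝ, 0 < t → ∀ x : ℝ × ℝ, |x.1| ≠ ξ t → |x.2| ≠ ξ t →
      ∃ du d₁ d₂ : ℝ,
        HasDerivAt (fun s : ℝ => u x s) du t
        ∧ HasDerivAt (fun y : ℝ => (σ (y, x.2) t).1) d₁ x.1
        ∧ HasDerivAt (fun y : ℝ => (σ (x.1, y) t).2) d₂ x.2
        ∧ du = d₁ + d₂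
        ∧ (|x.1| < ξ t → |x.2| < ξ t → du = 2 / ξ t)
        ∧ ((|x.1| < ξ t ∧ ξ t < |x.2|) ∨ (ξ t < |x.1| ∧ |x.2| < ξ t) → du = 1 / ξ t)
        ∧ (ξ t < |x.1| → ξ t < |x.2| → du = 0) := by
  intro t ht x h1 h2
  have hξc : ∀ s, ξ s = cc * s ^ ((1:ℝ)/3) := hξ
  have hξt : ξ t = cc * t ^ ((1:ℝ)/3) := hξc t
  have hξtpos : 0 < ξ t := by
    rw [hξt]; exact mul_pos cc_pos (Real.rpow_pos_of_pos ht _)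
  set e1 : ℝ := if |x.1| < ξ t then 1 / ξ t else 0 with he1
  set e2 : ℝ := if |x.2| < ξ t then 1 / ξ t else 0 with he2
  refine ⟨e1 + e2, e1, e2, ?_, ?_, ?_, rfl, ?_, ?_, ?_⟩
  · have hA : HasDerivAt (fun s : ℝ => max (x.1^2) ((ξ s)^2)) e1 t := by
      simp only [hξc, he1, hξt]
      exact aux_time t x.1 ht (hξt ▸ h1)
    have hB : HasDerivAt (fun s : ℝ => max (x.2^2) ((ξ s)^2)) e2 t := by
      simp only [hξc, he2, hξt]
      exact aux_time t x.2 ht (hξt ▸ h2)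
    have := (hA.add hB).sub_const (2 * R^2)
    refine this.congr_of_eventuallyEq ?_
    filter_upwards with s
    rw [hu]; rfl
  · have := aux_space (ξ t) x.1 hξtpos h1
    refine this.congr_of_eventuallyEq ?_
    filter_upwards with y
    simp only [hσ, hclamp]
  · have := aux_space (ξ t) x.2 hξtpos h2
    refine this.congr_of_eventuallyEq ?_
    filter_upwards with y
    simp only [hσ, hclamp]
  · intro ha hb
    rw [he1, he2, if_pos ha, if_pos hb]
    ring
  · rintro (⟨ha, hb⟩ | ⟨ha, hb⟩)
    · rw [he1, he2, if_pos ha, if_neg (not_lt.2 hb.le)]; ring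
    · rw [he1, he2, if_neg (not_lt.2 ha.le), if_pos hb]; ring
  · intro ha hb
    rw [he1, he2, if_neg (not_lt.2 ha.le), if_neg (not_lt.2 hb.le)]
    ring
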